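/- (Stability of single-variable non-causality.) If X = x is not an actual cause of φ in (M, u⃗) under the extended HP definition, M' is a conservative extension of the extended causal model M, and (M', u⃗) respects the equations for all endogenous variables of M' not in M, then X = x is not an actual cause of φ in (M', u⃗). -/
import Mathlib


open Classical

/-- A causal model over variable namespace ℕ (values are also coded as ℕ).
`V` is the finite set of endogenous variables; `F X ctx g` gives the value of the
structural equation for `X` given a context `ctx` (assignment to the exogenous
variables) and an assignment `g` to the endogenous variables. -/
structure CM where
  V : Finset ℕ
  F : ℕ → (ℕ → ℕ) → (ℕ → ℕ) → ℕ

/-- `v` is a solution of all the structural equations of `M` in context `ctx`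
(pinned to `0` outside `V` so that worlds are canonical). -/
def IsSol (M : CM) (ctx v : ℕ → ℕ) : Prop :=
  (∀ X ∈ M.V, v X = M.F X ctx v) ∧ ∀ X, X ∉ M.V → v X = 0

/-- `M` is recursive (acyclic): there is a total order on `V` such that each
equation depends only on strictly earlier endogenous variables. -/
def Recursive (M : CM) : Prop :=
  ∃ ord : ℕ → ℕ, Set.InjOn ord ↑M.V ∧
    ∀ X ∈ M.V, ∀ ctx g h, (∀ Y ∈ M.V, ord Y < ord X → g Y = h Y) →
      M.F X ctx g = M.F X ctx h

/-- The model obtained by intervening according to the partial assignment `I`. -/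
def CM.intervene (M : CM) (I : ℕ → Option ℕ) : CM :=
  ⟨M.V, fun X ctx g => (I X).getD (M.F X ctx g)⟩

/-- The intervention setting the variables in `S` to the values given by `f`. -/
def doSet (S : Finset ℕ) (f : ℕ → ℕ) : ℕ → Option ℕ :=
  fun Y => if Y ∈ S then some (f Y) else none

/-- `(M, ctx) ⊨ [I](X = x)`. -/
def Sat (M : CM) (ctx : ℕ → ℕ) (I : ℕ → Option ℕ) (X x : ℕ) : Prop :=
  ∀ v, IsSol (M.intervene I) ctx v → v X = x

/-- Boolean combinations of primitive events `X = x`. -/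
inductive BForm where
  | prim : ℕ → ℕ → BForm
  | not : BForm → BForm
  | and : BForm → BForm → BForm

def BForm.eval (v : ℕ → ℕ) : BForm → Prop
  | .prim X x => v X = x
  | .not φ => ¬ BForm.eval v φ
  | .and φ ψ => BForm.eval v φ ∧ BForm.eval v ψ

def BForm.vars : BForm → Finset ℕ
  | .prim X _ => {X}
  | .not φ => φ.vars
  | .and φ ψ => φ.vars ∪ ψ.vars

/-- `(M, ctx) ⊨ [I]φ`. -/
def SatF (M : CM) (ctx : ℕ → ℕ) (I : ℕ → Option ℕ) (φ : BForm) : Prop :=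
  ∀ v, IsSol (M.intervene I) ctx v → φ.eval v

/-- `M'` is a conservative extension of `M`: same exogenous variables (shared
namespace), `M.V ⊆ M'.V`, and for every context, every `X ∈ M.V`, and every
setting of the other variables of `M`, the intervened value of `X` agrees. -/
def ConsExt (M M' : CM) : Prop :=
  M.V ⊆ M'.V ∧
  ∀ ctx x, ∀ X ∈ M.V, ∀ w : ℕ → ℕ,
    (Sat M ctx (doSet (M.V.erase X) w) X x ↔ Sat M' ctx (doSet (M.V.erase X) w) X x)

/-- The intervention `X⃗ ← x⃗', W⃗ ← w⃗` used in AC2(a). -/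
def witI (Xs : Finset ℕ) (x' : ℕ → ℕ) (W : Finset ℕ) (w : ℕ → ℕ) : ℕ → Option ℕ :=
  fun Y => if Y ∈ Xs then some (x' Y) else if Y ∈ W then some (w Y) else none

/-- The intervention `X⃗ ← x⃗, Z⃗' ← z⃗, W⃗' ← w⃗` used in AC2(b) (here `vs` is the
actual solution, providing the actual values `z⃗`). -/
def acbI (Xs : Finset ℕ) (xv : ℕ → ℕ) (Z' : Finset ℕ) (vs : ℕ → ℕ)
    (W' : Finset ℕ) (w : ℕ → ℕ) : ℕ → Option ℕ :=
  fun Y => if Y ∈ Xs then some (xv Y) else if Y ∈ Z' then some (vs Y)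
    else if Y ∈ W' then some (w Y) else none

/-- `(W, w, x')` is a witness for AC2 (updated version, with AC2(b)). -/
def Wit (M : CM) (ctx : ℕ → ℕ) (Xs : Finset ℕ) (xv : ℕ → ℕ) (φ : BForm)
    (W : Finset ℕ) (w x' : ℕ → ℕ) : Prop :=
  W ⊆ M.V ∧ Xs ⊆ M.V \ W ∧
  SatF M ctx (witI Xs x' W w) (BForm.not φ) ∧
  ∀ vs, IsSol M ctx vs → ∀ W' ⊆ W, ∀ Z' ⊆ M.V \ W,
    SatF M ctx (acbI Xs xv Z' vs W' w) φ

/-- `(W, w, x')` is a witness for AC2 in the original HP sense (with AC2(b'):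
only `W` itself, not its subsets, is set to `w`). -/
def Wit' (M : CM) (ctx : ℕ → ℕ) (Xs : Finset ℕ) (xv : ℕ → ℕ) (φ : BForm)
    (W : Finset ℕ) (w x' : ℕ → ℕ) : Prop :=
  W ⊆ M.V ∧ Xs ⊆ M.V \ W ∧
  SatF M ctx (witI Xs x' W w) (BForm.not φ) ∧
  ∀ vs, IsSol M ctx vs → ∀ Z' ⊆ M.V \ W,
    SatF M ctx (acbI Xs xv Z' vs W w) φ

/-- AC1: `X⃗ = x⃗` and `φ` hold in the actual world. -/
def AC1 (M : CM) (ctx : ℕ → ℕ) (Xs : Finset ℕ) (xv : ℕ → ℕ) (φ : BForm) : Prop :=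
  ∀ v, IsSol M ctx v → (∀ X ∈ Xs, v X = xv X) ∧ φ.eval v

def PreCause (M : CM) (ctx : ℕ → ℕ) (Xs : Finset ℕ) (xv : ℕ → ℕ) (φ : BForm) : Prop :=
  AC1 M ctx Xs xv φ ∧ ∃ W w x', Wit M ctx Xs xv φ W w x'

/-- The (updated) HP definition of actual cause: AC1 ∧ AC2 ∧ AC3. -/
def IsCause (M : CM) (ctx : ℕ → ℕ) (Xs : Finset ℕ) (xv : ℕ → ℕ) (φ : BForm) : Prop :=
  PreCause M ctx Xs xv φ ∧ ∀ Xs' ⊂ Xs, ¬ PreCause M ctx Xs' xv φ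

def PreCause' (M : CM) (ctx : ℕ → ℕ) (Xs : Finset ℕ) (xv : ℕ → ℕ) (φ : BForm) : Prop :=
  AC1 M ctx Xs xv φ ∧ ∃ W w x', Wit' M ctx Xs xv φ W w x'

/-- The original HP definition of actual cause (with AC2(b')). -/
def IsCause' (M : CM) (ctx : ℕ → ℕ) (Xs : Finset ℕ) (xv : ℕ → ℕ) (φ : BForm) : Prop :=
  PreCause' M ctx Xs xv φ ∧ ∀ Xs' ⊂ Xs, ¬ PreCause' M ctx Xs' xv φ

/-- An extended causal model: a causal model with a normality preorder on worlds. -/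
structure ECM extends CM where
  normGE : (ℕ → ℕ) → (ℕ → ℕ) → Prop
  normGE_refl : ∀ s, normGE s s
  normGE_trans : ∀ s t u, normGE s t → normGE t u → normGE s u

/-- A world of `M`: an assignment to the endogenous variables (canonically `0` elsewhere). -/
def World (M : CM) (s : ℕ → ℕ) : Prop := ∀ X, X ∉ M.V → s X = 0

/-- The world determined by the intervention `I` in context `ctx` is at least as
normal as the actual world `s_ctx`. -/
def NormAbove (M : ECM) (ctx : ℕ → ℕ) (I : ℕ → Option ℕ) : Prop :=
  ∀ s su, IsSol (M.toCM.intervene I) ctx s → IsSol M.toCM ctx su → M.normGE s su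

/-- Witness for the extended HP definition: AC2 together with AC2(a⁺). -/
def EWit (M : ECM) (ctx : ℕ → ℕ) (Xs : Finset ℕ) (xv : ℕ → ℕ) (φ : BForm)
    (W : Finset ℕ) (w x' : ℕ → ℕ) : Prop :=
  Wit M.toCM ctx Xs xv φ W w x' ∧ NormAbove M ctx (witI Xs x' W w)

def EPreCause (M : ECM) (ctx : ℕ → ℕ) (Xs : Finset ℕ) (xv : ℕ → ℕ) (φ : BForm) : Prop :=
  AC1 M.toCM ctx Xs xv φ ∧ ∃ W w x', EWit M ctx Xs xv φ W w x'

/-- The extended (normality-sensitive) HP definition of actual cause. -/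
def EIsCause (M : ECM) (ctx : ℕ → ℕ) (Xs : Finset ℕ) (xv : ℕ → ℕ) (φ : BForm) : Prop :=
  EPreCause M ctx Xs xv φ ∧ ∀ Xs' ⊂ Xs, ¬ EPreCause M ctx Xs' xv φ

/-- In world `s`, variable `v0` takes on a value other than that specified by
the equations of `M` in context `ctx`. -/
def Deviates (M : CM) (ctx : ℕ → ℕ) (v0 : ℕ) (s : ℕ → ℕ) : Prop :=
  ∀ v, IsSol (M.intervene (doSet (M.V.erase v0) s)) ctx v → v v0 ≠ s v0

/-- `(M, ctx)` respects the equations for `v0`: any world in which `v0` deviates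
from its equation-determined value is not at least as normal as the actual world. -/
def Respects (M : ECM) (ctx : ℕ → ℕ) (v0 : ℕ) : Prop :=
  ∀ s, World M.toCM s → Deviates M.toCM ctx v0 s →
    ∀ su, IsSol M.toCM ctx su → ¬ M.normGE s su

/-- Conservative extension of extended causal models: conservative extension of
the underlying models plus condition CE on the normality preorders. -/
def EConsExt (M M' : ECM) : Prop :=
  ConsExt M.toCM M'.toCM ∧
  ∀ ctx (W : Finset ℕ), W ⊆ M.V → ∀ w : ℕ → ℕ,
    (NormAbove M ctx (doSet W w) ↔ NormAbove M' ctx (doSet W w))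

/-- Indicator of a proposition, used to express Boolean structural equations. -/
noncomputable def bI (p : Prop) : ℕ := if p then 1 else 0

/-! ### Auxiliary lemmas -/

lemma intervene_V (M : CM) (I : ℕ → Option ℕ) : (M.intervene I).V = M.V := rfl

lemma intervene_F (M : CM) (I : ℕ → Option ℕ) (X : ℕ) (ctx g : ℕ → ℕ) :
    (M.intervene I).F X ctx g = (I X).getD (M.F X ctx g) := rfl

lemma doSet_mem {S : Finset ℕ} {f : ℕ → ℕ} {Y : ℕ} (h : Y ∈ S) :
    doSet S f Y = some (f Y) := if_pos h

lemma doSet_notMem {S : Finset ℕ} {f : ℕ → ℕ} {Y : ℕ} (h : Y ∉ S) :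
    doSet S f Y = none := if_neg h

/-- Recursive models have solutions. -/
lemma sol_exists (M : CM) (hM : Recursive M) (ctx : ℕ → ℕ) : ∃ v, IsSol M ctx v := by
  obtain ⟨ord, _, hdep⟩ := hM
  set G : (ℕ → ℕ) → ℕ → ℕ := fun g X => if X ∈ M.V then M.F X ctx g else 0 with hG
  set z : ℕ → ℕ := fun _ => 0 with hz
  have hranklt : ∀ X ∈ M.V, ∀ Y ∈ M.V, ord Y < ord X →
      (M.V.filter (fun Z => ord Z < ord Y)).card < (M.V.filter (fun Z => ord Z < ord X)).card := by
    intro X hX Y hY hYX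
    apply Finset.card_lt_card
    refine (Finset.ssubset_iff_of_subset ?_).2 ⟨Y, ?_, ?_⟩
    · intro Z hZ
      simp only [Finset.mem_filter] at *
      exact ⟨hZ.1, hZ.2.trans hYX⟩
    · simp only [Finset.mem_filter]
      exact ⟨hY, hYX⟩
    · simp only [Finset.mem_filter]
      omega
  have key : ∀ n, ∀ X ∈ M.V, (M.V.filter (fun Y => ord Y < ord X)).card < n →
      G^[n+1] z X = G^[n] z X := by
    intro n
    induction n using Nat.strong_induction_on with
    | _ n ih =>
      intro X hX hr
      match n, hr with
      | Nat.succ k, hr =>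
        have h2 : G^[k+1+1] z = G (G^[k+1] z) := by rw [Function.iterate_succ_apply']
        have h3 : G^[k+1] z = G (G^[k] z) := by rw [Function.iterate_succ_apply']
        rw [h2, h3]
        show (if X ∈ M.V then M.F X ctx (G (G^[k] z)) else 0)
            = (if X ∈ M.V then M.F X ctx (G^[k] z) else 0)
        rw [if_pos hX, if_pos hX]
        apply hdep X hX ctx
        intro Y hY hord
        have hcard := hranklt X hX Y hY hord
        have := ih k (Nat.lt_succ_self k) Y hY (by omega)
        rw [h3] at this
        exact this
  refine ⟨G^[M.V.card+1] z, ?_, ?_⟩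
  · intro X hX
    have hrk : (M.V.filter (fun Y => ord Y < ord X)).card < M.V.card := by
      apply Finset.card_lt_card
      refine (Finset.ssubset_iff_of_subset (Finset.filter_subset _ _)).2 ⟨X, hX, ?_⟩
      simp only [Finset.mem_filter]
      omega
    have h1 : G^[M.V.card+1] z X = M.F X ctx (G^[M.V.card] z) := by
      rw [Function.iterate_succ_apply']
      show (if X ∈ M.V then M.F X ctx (G^[M.V.card] z) else 0) = _
      rw [if_pos hX]
    rw [h1]
    apply hdep X hX ctx
    intro Y hY hord
    exact (key M.V.card Y hY (lt_trans (hranklt X hX Y hY hord) hrk)).symm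
  · intro X hX
    rw [Function.iterate_succ_apply']
    show (if X ∈ M.V then M.F X ctx (G^[M.V.card] z) else 0) = 0
    rw [if_neg hX]

/-- Recursive models have unique solutions. -/
lemma sol_unique (M : CM) (hM : Recursive M) (ctx : ℕ → ℕ) {v w : ℕ → ℕ}
    (hv : IsSol M ctx v) (hw : IsSol M ctx w) : v = w := by
  obtain ⟨ord, _, hdep⟩ := hM
  have key : ∀ n, ∀ X ∈ M.V, ord X < n → v X = w X := by
    intro n
    induction n using Nat.strong_induction_on with
    | _ n ih =>
      intro X hX hord
      rw [hv.1 X hX, hw.1 X hX]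
      exact hdep X hX ctx v w (fun Y hY hYX => ih (ord X) hord Y hY hYX)
  funext X
  by_cases hX : X ∈ M.V
  · exact key (ord X + 1) X hX (Nat.lt_succ_self _)
  · rw [hv.2 X hX, hw.2 X hX]

lemma intervene_recursive (M : CM) (hM : Recursive M) (I : ℕ → Option ℕ) :
    Recursive (M.intervene I) := by
  obtain ⟨ord, hinj, hdep⟩ := hM
  refine ⟨ord, hinj, ?_⟩
  intro X hX ctx g h hgh
  show (I X).getD (M.F X ctx g) = (I X).getD (M.F X ctx h)
  rw [hdep X hX ctx g h hgh]

lemma sol_none (M : CM) (ctx v : ℕ → ℕ) :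
    IsSol (M.intervene (fun _ => none)) ctx v ↔ IsSol M ctx v := Iff.rfl

lemma eval_congr (φ : BForm) (v w : ℕ → ℕ) (h : ∀ Y ∈ φ.vars, v Y = w Y) :
    φ.eval v ↔ φ.eval w := by
  induction φ with
  | prim X x =>
      have := h X (by simp [BForm.vars])
      simp [BForm.eval, this]
  | not ψ ih => simp only [BForm.eval]; rw [ih (fun Y hY => h Y hY)]
  | and ψ χ ihψ ihχ =>
      simp only [BForm.eval]
      rw [ihψ (fun Y hY => h Y (by simp only [BForm.vars, Finset.mem_union]; exact Or.inl hY)),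
        ihχ (fun Y hY => h Y (by simp only [BForm.vars, Finset.mem_union]; exact Or.inr hY))]

/-- Restriction of a world of `M'` to the variables of `M`. -/
def restr (M : CM) (v : ℕ → ℕ) : ℕ → ℕ := fun X => if X ∈ M.V then v X else 0

/-- Solutions of `M'` under interventions supported in `M.V` restrict to
solutions of `M`. -/
lemma restr_sol (M M' : CM) (hM : Recursive M) (hM' : Recursive M') (hext : ConsExt M M')
    (ctx : ℕ → ℕ) (I : ℕ → Option ℕ) (hI : ∀ Y, Y ∉ M.V → I Y = none)
    (v' : ℕ → ℕ) (hv' : IsSol (M'.intervene I) ctx v') :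
    IsSol (M.intervene I) ctx (restr M v') := by
  constructor
  · intro X hX
    have hXv : restr M v' X = v' X := if_pos hX
    rw [intervene_F]
    cases hIX : I X with
    | some a =>
      have h1 := hv'.1 X (hext.1 hX)
      rw [intervene_F, hIX] at h1
      rw [hXv, h1, Option.getD_some, Option.getD_some]
    | none =>
      rw [Option.getD_none]
      have hsol2 : IsSol (M'.intervene (doSet (M.V.erase X) v')) ctx v' := by
        refine ⟨?_, hv'.2⟩
        intro Y hY
        rw [intervene_F]
        by_cases hYe : Y ∈ M.V.erase X
        · rw [doSet_mem hYe, Option.getD_some]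
        · rw [doSet_notMem hYe, Option.getD_none]
          have hYI : I Y = none := by
            by_cases hYM : Y ∈ M.V
            · have hYX : Y = X := by
                by_contra hne
                exact hYe (Finset.mem_erase.2 ⟨hne, hYM⟩)
              rw [hYX]; exact hIX
            · exact hI Y hYM
          have h1 := hv'.1 Y hY
          rw [intervene_F, hYI, Option.getD_none] at h1
          exact h1
      have hsat' : Sat M' ctx (doSet (M.V.erase X) v') X (v' X) := by
        intro u hu
        rw [sol_unique _ (intervene_recursive M' hM' _) ctx hu hsol2]
      have hsat : Sat M ctx (doSet (M.V.erase X) v') X (v' X) :=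
        (hext.2 ctx (v' X) X hX v').2 hsat'
      obtain ⟨u, hu⟩ := sol_exists (M.intervene (doSet (M.V.erase X) v'))
        (intervene_recursive M hM _) ctx
      have huX : u X = v' X := hsat u hu
      have hu_eq : u = restr M v' := by
        funext Y
        by_cases hYM : Y ∈ M.V
        · by_cases hYX : Y = X
          · rw [hYX, huX]; exact (if_pos hX).symm
          · have hYe : Y ∈ M.V.erase X := Finset.mem_erase.2 ⟨hYX, hYM⟩
            have h1 := hu.1 Y hYM
            rw [intervene_F, doSet_mem hYe, Option.getD_some] at h1
            rw [h1]
            exact (if_pos hYM).symm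
        · rw [hu.2 Y hYM]
          exact (if_neg hYM).symm
      have h2 := hu.1 X hX
      rw [intervene_F, doSet_notMem (Finset.notMem_erase X M.V), Option.getD_none] at h2
      rw [← hu_eq, h2]
  · intro X hX
    exact if_neg hX

/-- Transfer of `SatF` from a conservative extension back to the base model,
for interventions supported in `M.V` and formulas over `M.V`. -/
lemma satF_transfer (M M' : CM) (hM : Recursive M) (hM' : Recursive M') (hext : ConsExt M M')
    (ctx : ℕ → ℕ) (I : ℕ → Option ℕ) (hI : ∀ Y, Y ∉ M.V → I Y = none)
    (φ : BForm) (hφ : φ.vars ⊆ M.V) (h : SatF M' ctx I φ) : SatF M ctx I φ := by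
  intro t ht
  obtain ⟨t', ht'⟩ := sol_exists (M'.intervene I) (intervene_recursive M' hM' I) ctx
  have hres := restr_sol M M' hM hM' hext ctx I hI t' ht'
  have hteq : t = restr M t' := sol_unique _ (intervene_recursive M hM I) ctx ht hres
  rw [hteq]
  exact (eval_congr φ _ _ (fun Y hY => by
    show (if Y ∈ M.V then t' Y else 0) = t' Y
    rw [if_pos (hφ hY)])).2 (h t' ht')

/-- The empty set is never a (pre)cause in a recursive model. -/
lemma empty_not_precause (M : ECM) (hM : Recursive M.toCM) (ctx xv : ℕ → ℕ) (φ : BForm) :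
    ¬ EPreCause M ctx ∅ xv φ := by
  rintro ⟨_, W, w, x', ⟨⟨hWsub, _, hna, hb⟩, _⟩⟩
  obtain ⟨vs, hvs⟩ := sol_exists _ hM ctx
  have hIeq : acbI (∅ : Finset ℕ) xv ∅ vs W w = witI (∅ : Finset ℕ) x' W w := by
    funext Y
    simp [acbI, witI]
  obtain ⟨t, ht⟩ := sol_exists _ (intervene_recursive _ hM (witI ∅ x' W w)) ctx
  exact (hna t ht) (hb vs hvs W (Finset.Subset.refl W) ∅ (Finset.empty_subset _) t
    (by rw [hIeq]; exact ht))

/-- stability of single-variable non-causality under conservative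
extensions that respect the equations for the new variables. -/
theorem stability_single (M M' : ECM) (hM : Recursive M.toCM) (hM' : Recursive M'.toCM)
    (hext : EConsExt M M') (ctx : ℕ → ℕ) (X : ℕ) (hX : X ∈ M.V)
    (xv : ℕ → ℕ) (φ : BForm) (hφ : φ.vars ⊆ M.V)
    (hnc : ¬ EIsCause M ctx {X} xv φ)
    (hresp : ∀ v0 ∈ M'.V \ M.V, Respects M' ctx v0) :
    ¬ EIsCause M' ctx {X} xv φ := by
  intro h'
  obtain ⟨⟨hAC1', W, w, x', hW, hN⟩, _⟩ := h'
  obtain ⟨hextC, hCE⟩ := hext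
  have hMV : M.V ⊆ M'.V := hextC.1
  obtain ⟨su', hsu'⟩ := sol_exists _ hM' ctx
  obtain ⟨s', hs'⟩ := sol_exists _ (intervene_recursive _ hM' (witI {X} x' W w)) ctx
  obtain ⟨hWsub, hXsub, hna', hb'⟩ := hW
  have hXW : X ∉ W := (Finset.mem_sdiff.1 (hXsub (Finset.mem_singleton_self X))).2
  -- every new variable satisfies its equation in the witness world `s'`
  have hnewEq : ∀ Y ∈ M'.V, Y ∉ M.V → s' Y = M'.F Y ctx s' := by
    intro Y hY hYM
    by_contra hne
    have hdev : Deviates M'.toCM ctx Y s' := by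
      intro v hv heq
      apply hne
      have hveq : v = s' := by
        funext Z
        by_cases hZ : Z ∈ M'.V
        · by_cases hZY : Z = Y
          · rw [hZY]; exact heq
          · have h1 := hv.1 Z hZ
            rw [intervene_F, doSet_mem (Finset.mem_erase.2 ⟨hZY, hZ⟩), Option.getD_some] at h1
            exact h1
        · rw [hv.2 Z hZ, hs'.2 Z hZ]
      have h2 := hv.1 Y hY
      rw [intervene_F, doSet_notMem (Finset.notMem_erase Y M'.V), Option.getD_none] at h2
      rw [← hveq]
      exact h2
    exact hresp Y (Finset.mem_sdiff.2 ⟨hY, hYM⟩) s' hs'.2 hdev su' hsu' (hN s' su' hs' hsu')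
  -- `s'` agrees with `w` on `W`
  have hs'W : ∀ Y ∈ W, s' Y = w Y := by
    intro Y hY
    have hYX : ¬ Y ∈ ({X} : Finset ℕ) := by
      rw [Finset.mem_singleton]
      rintro rfl
      exact hXW hY
    have h1 := hs'.1 Y (hWsub hY)
    rw [intervene_F] at h1
    unfold witI at h1
    rw [if_neg hYX, if_pos hY, Option.getD_some] at h1
    exact h1
  -- `s'` also solves the restricted intervention in `M'`
  have hs'2 : IsSol (M'.toCM.intervene (witI {X} x' (W ∩ M.V) s')) ctx s' := by
    refine ⟨?_, hs'.2⟩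
    intro Y hY
    rw [intervene_F]
    unfold witI
    by_cases hYX : Y ∈ ({X} : Finset ℕ)
    · rw [if_pos hYX, Option.getD_some]
      have h1 := hs'.1 Y hY
      rw [intervene_F] at h1
      unfold witI at h1
      rw [if_pos hYX, Option.getD_some] at h1
      exact h1
    · rw [if_neg hYX]
      by_cases hYW : Y ∈ W ∩ M.V
      · rw [if_pos hYW, Option.getD_some]
      · rw [if_neg hYW, Option.getD_none]
        by_cases hYM : Y ∈ M.V
        · have hYnW : Y ∉ W := fun h => hYW (Finset.mem_inter.2 ⟨h, hYM⟩)
          have h1 := hs'.1 Y hY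
          rw [intervene_F] at h1
          unfold witI at h1
          rw [if_neg hYX, if_neg hYnW, Option.getD_none] at h1
          exact h1
        · exact hnewEq Y hY hYM
  -- the restricted intervention is supported in `M.V`
  have hsupp : ∀ Y, Y ∉ M.V → witI {X} x' (W ∩ M.V) s' Y = none := by
    intro Y hY
    unfold witI
    rw [if_neg, if_neg]
    · exact fun h => hY (Finset.mem_inter.1 h).2
    · rw [Finset.mem_singleton]
      rintro rfl
      exact hY hX
  -- AC2(a) in M
  have hnaM : SatF M.toCM ctx (witI {X} x' (W ∩ M.V) s') (BForm.not φ) := by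
    refine satF_transfer _ _ hM hM' hextC ctx _ hsupp (BForm.not φ) hφ ?_
    intro t ht
    rw [sol_unique _ (intervene_recursive _ hM' _) ctx ht hs'2]
    exact hna' s' hs'
  -- AC2(b) in M
  have hbM : ∀ vs, IsSol M.toCM ctx vs → ∀ W' ⊆ W ∩ M.V, ∀ Z' ⊆ M.V \ (W ∩ M.V),
      SatF M.toCM ctx (acbI {X} xv Z' vs W' s') φ := by
    intro vs hvs W' hW' Z' hZ'
    obtain ⟨vs', hvs'⟩ := sol_exists _ hM' ctx
    have hvs'r : IsSol M.toCM ctx (restr M.toCM vs') :=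
      (sol_none _ _ _).1 (restr_sol M.toCM M'.toCM hM hM' hextC ctx (fun _ => none)
        (fun _ _ => rfl) vs' ((sol_none _ _ _).2 hvs'))
    have hvseq : vs = restr M.toCM vs' := sol_unique _ hM ctx hvs hvs'r
    have hagree : ∀ Y ∈ M.V, vs Y = vs' Y := by
      intro Y hY
      rw [hvseq]
      exact if_pos hY
    have hIeq : acbI {X} xv Z' vs W' s' = acbI {X} xv Z' vs' W' w := by
      funext Y
      unfold acbI
      by_cases h1 : Y ∈ ({X} : Finset ℕ)
      · rw [if_pos h1, if_pos h1]
      · rw [if_neg h1, if_neg h1]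
        by_cases h2 : Y ∈ Z'
        · rw [if_pos h2, if_pos h2, hagree Y (Finset.mem_sdiff.1 (hZ' h2)).1]
        · rw [if_neg h2, if_neg h2]
          by_cases h3 : Y ∈ W'
          · rw [if_pos h3, if_pos h3, hs'W Y (Finset.mem_inter.1 (hW' h3)).1]
          · rw [if_neg h3, if_neg h3]
    rw [hIeq]
    have hsupp2 : ∀ Y, Y ∉ M.V → acbI {X} xv Z' vs' W' w Y = none := by
      intro Y hY
      unfold acbI
      rw [if_neg, if_neg, if_neg]
      · exact fun h => hY (Finset.mem_inter.1 (hW' h)).2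
      · exact fun h => hY (Finset.mem_sdiff.1 (hZ' h)).1
      · rw [Finset.mem_singleton]
        rintro rfl
        exact hY hX
    apply satF_transfer _ _ hM hM' hextC ctx _ hsupp2 _ hφ
    apply hb' vs' hvs' W' (hW'.trans Finset.inter_subset_left) Z'
    intro Y hY
    have hYM := Finset.mem_sdiff.1 (hZ' hY)
    exact Finset.mem_sdiff.2 ⟨hMV hYM.1, fun hYW => hYM.2 (Finset.mem_inter.2 ⟨hYW, hYM.1⟩)⟩
  -- AC2(a⁺) in M
  have hIdo : witI {X} x' (W ∩ M.V) s'
      = doSet (insert X (W ∩ M.V)) (fun Y => if Y = X then x' Y else s' Y) := by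
    funext Y
    unfold witI doSet
    by_cases hYX : Y = X
    · subst hYX
      simp
    · by_cases hYW : Y ∈ W ∩ M.V
      · simp [Finset.mem_insert, Finset.mem_singleton, hYX, hYW]
      · simp [Finset.mem_insert, Finset.mem_singleton, hYX, hYW]
  have hNormM : NormAbove M ctx (witI {X} x' (W ∩ M.V) s') := by
    rw [hIdo]
    apply (hCE ctx (insert X (W ∩ M.V)) (by
      intro Y hY
      rcases Finset.mem_insert.1 hY with rfl | hY
      · exact hX
      · exact (Finset.mem_inter.1 hY).2) _).2
    intro s su hs hsu
    have hs2 : IsSol (M'.toCM.intervene (doSet (insert X (W ∩ M.V))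
        (fun Y => if Y = X then x' Y else s' Y))) ctx s' := by
      rw [← hIdo]
      exact hs'2
    rw [sol_unique _ (intervene_recursive _ hM' _) ctx hs hs2]
    exact hN s' su hs' hsu
  -- AC1 in M
  have hAC1M : AC1 M.toCM ctx {X} xv φ := by
    intro v hv
    have hvr : IsSol M.toCM ctx (restr M.toCM su') :=
      (sol_none _ _ _).1 (restr_sol M.toCM M'.toCM hM hM' hextC ctx (fun _ => none)
        (fun _ _ => rfl) su' ((sol_none _ _ _).2 hsu'))
    have hveq : v = restr M.toCM su' := sol_unique _ hM ctx hv hvr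
    obtain ⟨h1, h2⟩ := hAC1' su' hsu'
    constructor
    · intro Y hY
      rw [Finset.mem_singleton] at hY
      subst hY
      rw [hveq]
      show (if Y ∈ M.V then su' Y else 0) = xv Y
      rw [if_pos hX]
      exact h1 Y (Finset.mem_singleton_self Y)
    · rw [hveq]
      exact (eval_congr φ _ _ (fun Y hY => by
        show (if Y ∈ M.V then su' Y else 0) = su' Y
        rw [if_pos (hφ hY)])).2 h2
  -- assemble
  apply hnc
  refine ⟨⟨hAC1M, W ∩ M.V, s', x', ⟨⟨Finset.inter_subset_right, ?_, hnaM, hbM⟩, hNormM⟩⟩, ?_⟩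
  · intro Y hY
    rw [Finset.mem_singleton] at hY
    subst hY
    exact Finset.mem_sdiff.2 ⟨hX, fun h => hXW (Finset.mem_inter.1 h).1⟩
  · intro Xs' hXs'
    rw [Finset.ssubset_singleton_iff] at hXs'
    subst hXs'
    exact empty_not_precause M hM ctx xv φ
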